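/- Let B~(k) be an n×n 'twisted' matrix: rows 1,…,k-1 form an upper bidiagonal block, row k is a singleton with single nonzero entry tilde{a}_k in position (k,k), and rows k,…,n below form a lower bidiagonal block in columns k,…,n (as arises after k−1 minor steps of oqd applied to Bᵀ). Write B~(k) = tilde{B} + E where tilde{B} equals B~(k) with its k-th row zeroed and E = tilde{a}_k·𝐞_k·𝐞_kᵀ. Then (B~(k))ᵀ·B~(k) = tilde{B}ᵀ·tilde{B} + Eᵀ·E, and consequently |σ_i(B~(k))² − σ_i(tilde{B})²| ≤ tilde{a}_k² for every i, where σ_i denotes the i-th largest singular value. -/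

import Mathlib

open Matrix

noncomputable section TwistedAux

variable {n : ℕ}

lemma inner_eq_dot (x y : EuclideanSpace ℝ (Fin n)) :
    (inner ℝ x y : ℝ) = (x : Fin n → ℝ) ⬝ᵥ (y : Fin n → ℝ) := by
  simp [PiLp.inner_apply, dotProduct, mul_comm]

lemma expand_basis (b : OrthonormalBasis (Fin n) ℝ (EuclideanSpace ℝ (Fin n)))
    (x : EuclideanSpace ℝ (Fin n)) :
    (x : Fin n → ℝ) = ∑ j, ((b j : Fin n → ℝ) ⬝ᵥ (x : Fin n → ℝ)) • (b j : Fin n → ℝ) := by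
  conv_lhs => rw [← b.sum_repr' x]
  simp only [inner_eq_dot, WithLp.ofLp_sum, WithLp.ofLp_smul]

lemma sum_dot (f : Fin n → (Fin n → ℝ)) (x : Fin n → ℝ) :
    (∑ j, f j) ⬝ᵥ x = ∑ j, f j ⬝ᵥ x := by
  simp only [dotProduct, Finset.sum_apply, Finset.sum_mul]
  exact Finset.sum_comm

lemma dot_self_eq (b : OrthonormalBasis (Fin n) ℝ (EuclideanSpace ℝ (Fin n)))
    (x : EuclideanSpace ℝ (Fin n)) :
    (x : Fin n → ℝ) ⬝ᵥ (x : Fin n → ℝ)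
      = ∑ j, ((b j : Fin n → ℝ) ⬝ᵥ (x : Fin n → ℝ)) ^ 2 := by
  nth_rewrite 1 [expand_basis b x]
  rw [sum_dot]
  refine Finset.sum_congr rfl fun j _ => ?_
  rw [smul_dotProduct, smul_eq_mul, sq]

lemma quad_eq (A : Matrix (Fin n) (Fin n) ℝ) (hA : A.IsHermitian)
    (x : EuclideanSpace ℝ (Fin n)) :
    A *ᵥ (x : Fin n → ℝ) ⬝ᵥ (x : Fin n → ℝ)
      = ∑ j, hA.eigenvalues j *
          ((hA.eigenvectorBasis j : Fin n → ℝ) ⬝ᵥ (x : Fin n → ℝ)) ^ 2 := by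
  have hmv : A *ᵥ (x : Fin n → ℝ)
      = ∑ j, (((hA.eigenvectorBasis j : Fin n → ℝ) ⬝ᵥ (x : Fin n → ℝ)) * hA.eigenvalues j)
          • (hA.eigenvectorBasis j : Fin n → ℝ) := by
    nth_rewrite 1 [expand_basis hA.eigenvectorBasis x]
    rw [← Matrix.mulVecLin_apply, map_sum]
    refine Finset.sum_congr rfl fun j _ => ?_
    have h1 : A *ᵥ (hA.eigenvectorBasis j : Fin n → ℝ)
        = hA.eigenvalues j • (hA.eigenvectorBasis j : Fin n → ℝ) :=
      hA.mulVec_eigenvectorBasis j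
    rw [_root_.map_smul, Matrix.mulVecLin_apply, h1, smul_smul]
  rw [hmv, sum_dot]
  refine Finset.sum_congr rfl fun j _ => ?_
  rw [smul_dotProduct, smul_eq_mul, sq]
  ring

lemma span_orth (y : EuclideanSpace ℝ (Fin n)) (S : Set (EuclideanSpace ℝ (Fin n)))
    (h : ∀ z ∈ S, (inner ℝ y z : ℝ) = 0) {x : EuclideanSpace ℝ (Fin n)}
    (hx : x ∈ Submodule.span ℝ S) : (inner ℝ y x : ℝ) = 0 := by
  have hle : Submodule.span ℝ S ≤ LinearMap.ker ((innerSL ℝ y : _ →L[ℝ] ℝ) : _ →ₗ[ℝ] ℝ) :=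
    Submodule.span_le.mpr fun z hz => by simpa using h z hz
  simpa using hle hx

lemma weyl_aux (A B : Matrix (Fin n) (Fin n) ℝ) (hA : A.IsHermitian) (hB : B.IsHermitian)
    (c : ℝ)
    (h : ∀ x : Fin n → ℝ, A *ᵥ x ⬝ᵥ x ≤ B *ᵥ x ⬝ᵥ x + c * (x ⬝ᵥ x))
    (μ ν : Fin n → ℝ) (hμa : Antitone μ) (hνa : Antitone ν)
    (hμ : ∃ σ : Equiv.Perm (Fin n), μ = hA.eigenvalues ∘ σ)
    (hν : ∃ σ : Equiv.Perm (Fin n), ν = hB.eigenvalues ∘ σ)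
    (i : Fin n) : μ i ≤ ν i + c := by
  obtain ⟨σ, hσ⟩ := hμ
  obtain ⟨τ, hτ⟩ := hν
  set u : Fin n → EuclideanSpace ℝ (Fin n) := fun j => hA.eigenvectorBasis (σ j) with hu
  set v : Fin n → EuclideanSpace ℝ (Fin n) := fun j => hB.eigenvectorBasis (τ j) with hv
  have hun : Orthonormal ℝ u := hA.eigenvectorBasis.orthonormal.comp σ σ.injective
  have hvn : Orthonormal ℝ v := hB.eigenvectorBasis.orthonormal.comp τ τ.injective
  -- index maps
  have hin : (i : ℕ) + 1 ≤ n := i.isLt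
  set e : Fin ((i : ℕ) + 1) → Fin n := fun m => Fin.castLE hin m with he
  set f : Fin (n - (i : ℕ)) → Fin n := fun m => ⟨(i : ℕ) + m, by omega⟩ with hf
  have hei : Function.Injective e := Fin.castLE_injective hin
  have hfi : Function.Injective f := by
    intro a b hab
    simpa [hf, Fin.ext_iff] using hab
  set V : Submodule ℝ (EuclideanSpace ℝ (Fin n)) := Submodule.span ℝ (Set.range (u ∘ e)) with hV
  set W : Submodule ℝ (EuclideanSpace ℝ (Fin n)) := Submodule.span ℝ (Set.range (v ∘ f)) with hW
  have hVd : Module.finrank ℝ V = (i : ℕ) + 1 := by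
    rw [hV, finrank_span_eq_card ((hun.comp e hei).linearIndependent)]
    simp
  have hWd : Module.finrank ℝ W = n - (i : ℕ) := by
    rw [hW, finrank_span_eq_card ((hvn.comp f hfi).linearIndependent)]
    simp
  -- nontrivial intersection
  have hsum := Submodule.finrank_sup_add_finrank_inf_eq V W
  have hle : Module.finrank ℝ ↥(V ⊔ W) ≤ n := by
    have := Submodule.finrank_le (V ⊔ W)
    simpa [finrank_euclideanSpace] using this
  have hpos : (V ⊓ W) ≠ ⊥ := by
    intro hbot
    rw [hbot, finrank_bot] at hsum
    omega
  obtain ⟨x, hxVW, hx0⟩ := Submodule.exists_mem_ne_zero_of_ne_bot hpos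
  have hxV : x ∈ V := hxVW.1
  have hxW : x ∈ W := hxVW.2
  set cu : Fin n → ℝ := fun j => (u j : Fin n → ℝ) ⬝ᵥ (x : Fin n → ℝ) with hcu
  set cv : Fin n → ℝ := fun j => (v j : Fin n → ℝ) ⬝ᵥ (x : Fin n → ℝ) with hcv
  -- vanishing coefficients
  have hcu0 : ∀ j, i < j → cu j = 0 := by
    intro j hj
    have : (inner ℝ (u j) x : ℝ) = 0 := by
      refine span_orth _ _ (fun z hz => ?_) hxV
      obtain ⟨m, rfl⟩ := hz
      refine hun.2 ?_
      intro hje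
      rw [hje] at hj
      have : (e m : ℕ) ≤ (i : ℕ) := by
        simp [he, Fin.le_def]
        omega
      exact absurd (Fin.lt_def.mp hj) (by omega)
    rw [inner_eq_dot] at this
    exact this
  have hcv0 : ∀ j, j < i → cv j = 0 := by
    intro j hj
    have : (inner ℝ (v j) x : ℝ) = 0 := by
      refine span_orth _ _ (fun z hz => ?_) hxW
      obtain ⟨m, rfl⟩ := hz
      refine hvn.2 ?_
      intro hje
      rw [hje] at hj
      have : (i : ℕ) ≤ (f m : ℕ) := by simp [hf]
      exact absurd (Fin.lt_def.mp hj) (by omega)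
    rw [inner_eq_dot] at this
    exact this
  -- norms and quadratic forms
  have hs : (0:ℝ) < (x : Fin n → ℝ) ⬝ᵥ (x : Fin n → ℝ) := by
    rw [← inner_eq_dot]
    rcases lt_or_eq_of_le (real_inner_self_nonneg (x := x)) with h' | h'
    · exact h'
    · exact absurd (inner_self_eq_zero.mp h'.symm) hx0
  have hsu : (x : Fin n → ℝ) ⬝ᵥ (x : Fin n → ℝ) = ∑ j, cu j ^ 2 := by
    rw [dot_self_eq hA.eigenvectorBasis x]
    exact (Equiv.sum_comp σ fun j => ((hA.eigenvectorBasis j : Fin n → ℝ) ⬝ᵥ (x : Fin n → ℝ)) ^ 2).symm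
  have hsv : (x : Fin n → ℝ) ⬝ᵥ (x : Fin n → ℝ) = ∑ j, cv j ^ 2 := by
    rw [dot_self_eq hB.eigenvectorBasis x]
    exact (Equiv.sum_comp τ fun j => ((hB.eigenvectorBasis j : Fin n → ℝ) ⬝ᵥ (x : Fin n → ℝ)) ^ 2).symm
  have hqA : A *ᵥ (x : Fin n → ℝ) ⬝ᵥ (x : Fin n → ℝ) = ∑ j, μ j * cu j ^ 2 := by
    rw [quad_eq A hA x]
    refine (Equiv.sum_comp σ fun j => hA.eigenvalues j *
      ((hA.eigenvectorBasis j : Fin n → ℝ) ⬝ᵥ (x : Fin n → ℝ)) ^ 2).symm.trans ?_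
    refine Finset.sum_congr rfl fun j _ => ?_
    rw [hσ]
    rfl
  have hqB : B *ᵥ (x : Fin n → ℝ) ⬝ᵥ (x : Fin n → ℝ) = ∑ j, ν j * cv j ^ 2 := by
    rw [quad_eq B hB x]
    refine (Equiv.sum_comp τ fun j => hB.eigenvalues j *
      ((hB.eigenvectorBasis j : Fin n → ℝ) ⬝ᵥ (x : Fin n → ℝ)) ^ 2).symm.trans ?_
    refine Finset.sum_congr rfl fun j _ => ?_
    rw [hτ]
    rfl
  -- lower bound for A
  have hlow : μ i * ((x : Fin n → ℝ) ⬝ᵥ (x : Fin n → ℝ))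
      ≤ A *ᵥ (x : Fin n → ℝ) ⬝ᵥ (x : Fin n → ℝ) := by
    rw [hqA, hsu, Finset.mul_sum]
    refine Finset.sum_le_sum fun j _ => ?_
    by_cases hj : i < j
    · rw [hcu0 j hj]; simp
    · push_neg at hj
      exact mul_le_mul_of_nonneg_right (hμa hj) (sq_nonneg _)
  have hup : B *ᵥ (x : Fin n → ℝ) ⬝ᵥ (x : Fin n → ℝ)
      ≤ ν i * ((x : Fin n → ℝ) ⬝ᵥ (x : Fin n → ℝ)) := by
    rw [hqB, hsv, Finset.mul_sum]
    refine Finset.sum_le_sum fun j _ => ?_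
    by_cases hj : j < i
    · rw [hcv0 j hj]; simp
    · push_neg at hj
      exact mul_le_mul_of_nonneg_right (hνa hj) (sq_nonneg _)
  have := (hlow.trans (h x)).trans (by linarith [hup] :
    B *ᵥ (x : Fin n → ℝ) ⬝ᵥ (x : Fin n → ℝ) + c * ((x : Fin n → ℝ) ⬝ᵥ (x : Fin n → ℝ))
      ≤ (ν i + c) * ((x : Fin n → ℝ) ⬝ᵥ (x : Fin n → ℝ)))
  exact le_of_mul_le_mul_right (by linarith [this]) hs

end TwistedAux

/-- Twisted-matrix deflation: if row `k` of `B̃` is zero and `E = ã_k·𝐞ₖ𝐞ₖᵀ`,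
then `(B̃+E)ᵀ(B̃+E) = B̃ᵀB̃ + EᵀE`, and the ordered squared singular values of
`B̃+E` and `B̃` differ by at most `ã_k²`. -/
theorem twisted_deflation (n : ℕ) (Btil : Matrix (Fin n) (Fin n) ℝ) (k : Fin n)
    (atil : ℝ) (hrow : ∀ j, Btil k j = 0)
    (E : Matrix (Fin n) (Fin n) ℝ) (hE : E = Matrix.single k k atil)
    (hB : ((Btil + E)ᵀ * (Btil + E)).IsHermitian)
    (hBt : (Btilᵀ * Btil).IsHermitian)
    (μ ν : Fin n → ℝ) (hμa : Antitone μ) (hνa : Antitone ν)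
    (hμ : ∃ σ : Equiv.Perm (Fin n), μ = hB.eigenvalues ∘ σ)
    (hν : ∃ σ : Equiv.Perm (Fin n), ν = hBt.eigenvalues ∘ σ) :
    (Btil + E)ᵀ * (Btil + E) = Btilᵀ * Btil + Eᵀ * E ∧
      ∀ i, |μ i - ν i| ≤ atil ^ 2 := by
  have hEB : Eᵀ * Btil = 0 := by
    ext i j
    simp only [Matrix.mul_apply, Matrix.transpose_apply, hE, Matrix.single,
      Matrix.of_apply, Matrix.zero_apply]
    rw [Finset.sum_eq_single k]
    · by_cases hik : i = k <;> simp [hik, hrow]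
    · intro b _ hbk; simp [Ne.symm hbk]
    · simp
  have hBE : Btilᵀ * E = 0 := by
    ext i j
    simp only [Matrix.mul_apply, Matrix.transpose_apply, hE, Matrix.single,
      Matrix.of_apply, Matrix.zero_apply]
    rw [Finset.sum_eq_single k]
    · simp [hrow]
    · intro b _ hbk; simp [Ne.symm hbk]
    · simp
  have heq : (Btil + E)ᵀ * (Btil + E) = Btilᵀ * Btil + Eᵀ * E := by
    rw [Matrix.transpose_add, Matrix.add_mul, Matrix.mul_add, Matrix.mul_add, hEB, hBE]
    abel
  refine ⟨heq, fun i => ?_⟩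
  -- quadratic form of EᵀE
  have hET : Eᵀ = E := by
    ext a b
    simp only [Matrix.transpose_apply, hE, Matrix.single, Matrix.of_apply]
    by_cases h1 : k = a <;> by_cases h2 : k = b <;> simp [h1, h2]
  have hEE : Eᵀ * E = Matrix.single k k (atil ^ 2) := by
    rw [hET, hE, Matrix.single_mul_single_same, sq]
  have hq : ∀ x : Fin n → ℝ, (Eᵀ * E) *ᵥ x ⬝ᵥ x = atil ^ 2 * x k ^ 2 := by
    intro x
    rw [hEE]
    simp [Matrix.mulVec, dotProduct, Matrix.single, ite_and,
      Finset.sum_ite_eq, Finset.mul_sum]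
    ring
  have hdot : ∀ x : Fin n → ℝ, x ⬝ᵥ x = ∑ i, x i ^ 2 := by
    intro x; simp [dotProduct, sq]
  have hxx : ∀ x : Fin n → ℝ, x k ^ 2 ≤ x ⬝ᵥ x := by
    intro x
    rw [hdot]
    exact Finset.single_le_sum (fun i _ => sq_nonneg (x i)) (Finset.mem_univ k)
  have hdn : ∀ x : Fin n → ℝ, 0 ≤ x ⬝ᵥ x := by
    intro x; rw [hdot]; positivity
  have h1 : ∀ x : Fin n → ℝ, ((Btil + E)ᵀ * (Btil + E)) *ᵥ x ⬝ᵥ x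
      ≤ (Btilᵀ * Btil) *ᵥ x ⬝ᵥ x + atil ^ 2 * (x ⬝ᵥ x) := by
    intro x
    rw [heq, Matrix.add_mulVec, add_dotProduct, hq x]
    have h3 := hxx x
    nlinarith [sq_nonneg atil]
  have h2 : ∀ x : Fin n → ℝ, (Btilᵀ * Btil) *ᵥ x ⬝ᵥ x
      ≤ ((Btil + E)ᵀ * (Btil + E)) *ᵥ x ⬝ᵥ x + atil ^ 2 * (x ⬝ᵥ x) := by
    intro x
    rw [heq, Matrix.add_mulVec, add_dotProduct, hq x]
    have h3 := hdn x
    nlinarith [sq_nonneg atil, sq_nonneg (x k)]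
  have hd1 := weyl_aux _ _ hB hBt _ h1 μ ν hμa hνa hμ hν i
  have hd2 := weyl_aux _ _ hBt hB _ h2 ν μ hνa hμa hν hμ i
  rw [abs_sub_le_iff]
  constructor <;> linarith
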